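/- Let A₁, ..., A₄ be complex vector spaces, aⱼⁱ ∈ Aᵢ vectors, and define S(t) = (a¹₁ + t a¹₃ + t² a¹₂) ⊗ (a²₁ + t² a²₂) ⊗ (a³₁ + t a³₂ + t² λ a³₂) ⊗ (b₃ + t b₂ + t² b₁) for b₁, b₂, b₃ ∈ A₄ and λ ∈ ℂ. Then (1/2)S''(0) = a¹₁ ⊗ a²₁ ⊗ a³₁ ⊗ b₁ + a¹₁ ⊗ a²₁ ⊗ (λ a³₂) ⊗ b₃ + a¹₁ ⊗ a²₂ ⊗ a³₁ ⊗ b₃ + a¹₂ ⊗ a²₁ ⊗ a³₁ ⊗ b₃ + a¹₁ ⊗ a²₁ ⊗ a³₂ ⊗ b₂ + a¹₃ ⊗ a²₁ ⊗ a³₁ ⊗ b₂ + a¹₃ ⊗ a²₁ ⊗ a³₂ ⊗ b₃, and consequently this tensor has border rank at most 3. -/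

import Mathlib

open TensorProduct

noncomputable section

variable {A₁ A₂ A₃ A₄ : Type*} [AddCommGroup A₁] [Module ℂ A₁] [AddCommGroup A₂] [Module ℂ A₂]
  [AddCommGroup A₃] [Module ℂ A₃] [AddCommGroup A₄] [Module ℂ A₄]

/-- `T ∈ A₁ ⊗ A₂ ⊗ A₃ ⊗ A₄` has tensor rank at most `r`. -/
def rank4LE (r : ℕ) (T : A₁ ⊗[ℂ] (A₂ ⊗[ℂ] (A₃ ⊗[ℂ] A₄))) : Prop :=
  ∃ (a : Fin r → A₁) (b : Fin r → A₂) (c : Fin r → A₃) (d : Fin r → A₄),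
    T = ∑ i, a i ⊗ₜ[ℂ] (b i ⊗ₜ[ℂ] (c i ⊗ₜ[ℂ] d i))

set_option maxHeartbeats 1600000 in
/-- for the curve
`S(t) = (a¹₁ + t a¹₃ + t² a¹₂) ⊗ (a²₁ + t² a²₂) ⊗ (a³₁ + t a³₂ + t² λ a³₂) ⊗ (b₃ + t b₂ + t² b₁)`,
the tensor `(1/2) S''(0)` (i.e. the coefficient of `t²` in the polynomial expansion of `S`)
equals the displayed seven-term tensor, which consequently has border rank at most `3`. -/
theorem second_derivative_normal_form_case2
    [TopologicalSpace (A₁ ⊗[ℂ] (A₂ ⊗[ℂ] (A₃ ⊗[ℂ] A₄)))]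
    [IsTopologicalAddGroup (A₁ ⊗[ℂ] (A₂ ⊗[ℂ] (A₃ ⊗[ℂ] A₄)))]
    [ContinuousSMul ℂ (A₁ ⊗[ℂ] (A₂ ⊗[ℂ] (A₃ ⊗[ℂ] A₄)))]
    (a11 a12 a13 : A₁) (a21 a22 : A₂) (a31 a32 : A₃) (b₁ b₂ b₃ : A₄) (lam : ℂ)
    (S : ℂ → A₁ ⊗[ℂ] (A₂ ⊗[ℂ] (A₃ ⊗[ℂ] A₄)))
    (hS : ∀ t, S t = (a11 + t • a13 + t ^ 2 • a12) ⊗ₜ[ℂ]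
      ((a21 + t ^ 2 • a22) ⊗ₜ[ℂ]
        ((a31 + t • a32 + (t ^ 2 * lam) • a32) ⊗ₜ[ℂ] (b₃ + t • b₂ + t ^ 2 • b₁))))
    (T : A₁ ⊗[ℂ] (A₂ ⊗[ℂ] (A₃ ⊗[ℂ] A₄)))
    (hT : T = a11 ⊗ₜ[ℂ] (a21 ⊗ₜ[ℂ] (a31 ⊗ₜ[ℂ] b₁))
      + a11 ⊗ₜ[ℂ] (a21 ⊗ₜ[ℂ] ((lam • a32) ⊗ₜ[ℂ] b₃))
      + a11 ⊗ₜ[ℂ] (a22 ⊗ₜ[ℂ] (a31 ⊗ₜ[ℂ] b₃))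
      + a12 ⊗ₜ[ℂ] (a21 ⊗ₜ[ℂ] (a31 ⊗ₜ[ℂ] b₃))
      + a11 ⊗ₜ[ℂ] (a21 ⊗ₜ[ℂ] (a32 ⊗ₜ[ℂ] b₂))
      + a13 ⊗ₜ[ℂ] (a21 ⊗ₜ[ℂ] (a31 ⊗ₜ[ℂ] b₂))
      + a13 ⊗ₜ[ℂ] (a21 ⊗ₜ[ℂ] (a32 ⊗ₜ[ℂ] b₃))) :
    (∃ c : ℕ → A₁ ⊗[ℂ] (A₂ ⊗[ℂ] (A₃ ⊗[ℂ] A₄)),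
        (∀ t, S t = ∑ k ∈ Finset.range 9, t ^ k • c k) ∧ c 2 = T) ∧
      T ∈ closure {R : A₁ ⊗[ℂ] (A₂ ⊗[ℂ] (A₃ ⊗[ℂ] A₄)) | rank4LE 3 R} := by
  classical
  set c : ℕ → A₁ ⊗[ℂ] (A₂ ⊗[ℂ] (A₃ ⊗[ℂ] A₄)) := fun k =>
      if k = 0 then
        a11 ⊗ₜ[ℂ] (a21 ⊗ₜ[ℂ] (a31 ⊗ₜ[ℂ] b₃))
      else       if k = 1 then
        a11 ⊗ₜ[ℂ] (a21 ⊗ₜ[ℂ] (a31 ⊗ₜ[ℂ] b₂))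
        + a11 ⊗ₜ[ℂ] (a21 ⊗ₜ[ℂ] (a32 ⊗ₜ[ℂ] b₃))
        + a13 ⊗ₜ[ℂ] (a21 ⊗ₜ[ℂ] (a31 ⊗ₜ[ℂ] b₃))
      else       if k = 2 then
        a11 ⊗ₜ[ℂ] (a21 ⊗ₜ[ℂ] (a31 ⊗ₜ[ℂ] b₁))
        + a11 ⊗ₜ[ℂ] (a21 ⊗ₜ[ℂ] (a32 ⊗ₜ[ℂ] b₂))
        + a11 ⊗ₜ[ℂ] (a21 ⊗ₜ[ℂ] ((lam • a32) ⊗ₜ[ℂ] b₃))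
        + a11 ⊗ₜ[ℂ] (a22 ⊗ₜ[ℂ] (a31 ⊗ₜ[ℂ] b₃))
        + a13 ⊗ₜ[ℂ] (a21 ⊗ₜ[ℂ] (a31 ⊗ₜ[ℂ] b₂))
        + a13 ⊗ₜ[ℂ] (a21 ⊗ₜ[ℂ] (a32 ⊗ₜ[ℂ] b₃))
        + a12 ⊗ₜ[ℂ] (a21 ⊗ₜ[ℂ] (a31 ⊗ₜ[ℂ] b₃))
      else       if k = 3 then
        a11 ⊗ₜ[ℂ] (a21 ⊗ₜ[ℂ] (a32 ⊗ₜ[ℂ] b₁))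
        + a11 ⊗ₜ[ℂ] (a21 ⊗ₜ[ℂ] ((lam • a32) ⊗ₜ[ℂ] b₂))
        + a11 ⊗ₜ[ℂ] (a22 ⊗ₜ[ℂ] (a31 ⊗ₜ[ℂ] b₂))
        + a11 ⊗ₜ[ℂ] (a22 ⊗ₜ[ℂ] (a32 ⊗ₜ[ℂ] b₃))
        + a13 ⊗ₜ[ℂ] (a21 ⊗ₜ[ℂ] (a31 ⊗ₜ[ℂ] b₁))
        + a13 ⊗ₜ[ℂ] (a21 ⊗ₜ[ℂ] (a32 ⊗ₜ[ℂ] b₂))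
        + a13 ⊗ₜ[ℂ] (a21 ⊗ₜ[ℂ] ((lam • a32) ⊗ₜ[ℂ] b₃))
        + a13 ⊗ₜ[ℂ] (a22 ⊗ₜ[ℂ] (a31 ⊗ₜ[ℂ] b₃))
        + a12 ⊗ₜ[ℂ] (a21 ⊗ₜ[ℂ] (a31 ⊗ₜ[ℂ] b₂))
        + a12 ⊗ₜ[ℂ] (a21 ⊗ₜ[ℂ] (a32 ⊗ₜ[ℂ] b₃))
      else       if k = 4 then
        a11 ⊗ₜ[ℂ] (a21 ⊗ₜ[ℂ] ((lam • a32) ⊗ₜ[ℂ] b₁))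
        + a11 ⊗ₜ[ℂ] (a22 ⊗ₜ[ℂ] (a31 ⊗ₜ[ℂ] b₁))
        + a11 ⊗ₜ[ℂ] (a22 ⊗ₜ[ℂ] (a32 ⊗ₜ[ℂ] b₂))
        + a11 ⊗ₜ[ℂ] (a22 ⊗ₜ[ℂ] ((lam • a32) ⊗ₜ[ℂ] b₃))
        + a13 ⊗ₜ[ℂ] (a21 ⊗ₜ[ℂ] (a32 ⊗ₜ[ℂ] b₁))
        + a13 ⊗ₜ[ℂ] (a21 ⊗ₜ[ℂ] ((lam • a32) ⊗ₜ[ℂ] b₂))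
        + a13 ⊗ₜ[ℂ] (a22 ⊗ₜ[ℂ] (a31 ⊗ₜ[ℂ] b₂))
        + a13 ⊗ₜ[ℂ] (a22 ⊗ₜ[ℂ] (a32 ⊗ₜ[ℂ] b₃))
        + a12 ⊗ₜ[ℂ] (a21 ⊗ₜ[ℂ] (a31 ⊗ₜ[ℂ] b₁))
        + a12 ⊗ₜ[ℂ] (a21 ⊗ₜ[ℂ] (a32 ⊗ₜ[ℂ] b₂))
        + a12 ⊗ₜ[ℂ] (a21 ⊗ₜ[ℂ] ((lam • a32) ⊗ₜ[ℂ] b₃))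
        + a12 ⊗ₜ[ℂ] (a22 ⊗ₜ[ℂ] (a31 ⊗ₜ[ℂ] b₃))
      else       if k = 5 then
        a11 ⊗ₜ[ℂ] (a22 ⊗ₜ[ℂ] (a32 ⊗ₜ[ℂ] b₁))
        + a11 ⊗ₜ[ℂ] (a22 ⊗ₜ[ℂ] ((lam • a32) ⊗ₜ[ℂ] b₂))
        + a13 ⊗ₜ[ℂ] (a21 ⊗ₜ[ℂ] ((lam • a32) ⊗ₜ[ℂ] b₁))
        + a13 ⊗ₜ[ℂ] (a22 ⊗ₜ[ℂ] (a31 ⊗ₜ[ℂ] b₁))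
        + a13 ⊗ₜ[ℂ] (a22 ⊗ₜ[ℂ] (a32 ⊗ₜ[ℂ] b₂))
        + a13 ⊗ₜ[ℂ] (a22 ⊗ₜ[ℂ] ((lam • a32) ⊗ₜ[ℂ] b₃))
        + a12 ⊗ₜ[ℂ] (a21 ⊗ₜ[ℂ] (a32 ⊗ₜ[ℂ] b₁))
        + a12 ⊗ₜ[ℂ] (a21 ⊗ₜ[ℂ] ((lam • a32) ⊗ₜ[ℂ] b₂))
        + a12 ⊗ₜ[ℂ] (a22 ⊗ₜ[ℂ] (a31 ⊗ₜ[ℂ] b₂))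
        + a12 ⊗ₜ[ℂ] (a22 ⊗ₜ[ℂ] (a32 ⊗ₜ[ℂ] b₃))
      else       if k = 6 then
        a11 ⊗ₜ[ℂ] (a22 ⊗ₜ[ℂ] ((lam • a32) ⊗ₜ[ℂ] b₁))
        + a13 ⊗ₜ[ℂ] (a22 ⊗ₜ[ℂ] (a32 ⊗ₜ[ℂ] b₁))
        + a13 ⊗ₜ[ℂ] (a22 ⊗ₜ[ℂ] ((lam • a32) ⊗ₜ[ℂ] b₂))
        + a12 ⊗ₜ[ℂ] (a21 ⊗ₜ[ℂ] ((lam • a32) ⊗ₜ[ℂ] b₁))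
        + a12 ⊗ₜ[ℂ] (a22 ⊗ₜ[ℂ] (a31 ⊗ₜ[ℂ] b₁))
        + a12 ⊗ₜ[ℂ] (a22 ⊗ₜ[ℂ] (a32 ⊗ₜ[ℂ] b₂))
        + a12 ⊗ₜ[ℂ] (a22 ⊗ₜ[ℂ] ((lam • a32) ⊗ₜ[ℂ] b₃))
      else       if k = 7 then
        a13 ⊗ₜ[ℂ] (a22 ⊗ₜ[ℂ] ((lam • a32) ⊗ₜ[ℂ] b₁))
        + a12 ⊗ₜ[ℂ] (a22 ⊗ₜ[ℂ] (a32 ⊗ₜ[ℂ] b₁))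
        + a12 ⊗ₜ[ℂ] (a22 ⊗ₜ[ℂ] ((lam • a32) ⊗ₜ[ℂ] b₂))
      else       if k = 8 then
        a12 ⊗ₜ[ℂ] (a22 ⊗ₜ[ℂ] ((lam • a32) ⊗ₜ[ℂ] b₁))
      else (0 : A₁ ⊗[ℂ] (A₂ ⊗[ℂ] (A₃ ⊗[ℂ] A₄))) with hc
  have hpoly : ∀ t : ℂ, S t = ∑ k ∈ Finset.range 9, t ^ k • c k := by
    intro t
    rw [hS]
    simp only [hc, Finset.sum_range_succ, Finset.sum_range_zero]
    norm_num
    simp only [tmul_add, add_tmul, ← smul_tmul', tmul_smul, smul_smul]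
    module
  have hc2 : c 2 = T := by
    rw [hT]
    simp only [hc]
    norm_num
    module
  refine ⟨⟨c, hpoly, hc2⟩, ?_⟩
  have h0 : S 0 = c 0 := by
    rw [hpoly 0]
    simp [Finset.sum_range_succ]
  have heven : ∀ t : ℂ, S t + S (-t)
      = (2 : ℂ) • c 0 + (2 * t ^ 2) • (T + t ^ 2 • c 4 + t ^ 4 • c 6 + t ^ 6 • c 8) := by
    intro t
    rw [hpoly t, hpoly (-t), ← hc2]
    simp only [Finset.sum_range_succ, Finset.sum_range_zero]
    module
  haveI : ContinuousAdd (A₁ ⊗[ℂ] (A₂ ⊗[ℂ] (A₃ ⊗[ℂ] A₄))) :=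
    @IsTopologicalAddGroup.toContinuousAdd _ _ _ ‹_›
  have hgcont : Continuous (fun t : ℂ => T + t ^ 2 • c 4 + t ^ 4 • c 6 + t ^ 6 • c 8) :=
    by fun_prop
  have hmem : ∀ t : ℂ, t ≠ 0 → (T + t ^ 2 • c 4 + t ^ 4 • c 6 + t ^ 6 • c 8)
      ∈ {R : A₁ ⊗[ℂ] (A₂ ⊗[ℂ] (A₃ ⊗[ℂ] A₄)) | rank4LE 3 R} := by
    intro t ht
    have h2t : (2 * t ^ 2 : ℂ) ≠ 0 := mul_ne_zero two_ne_zero (pow_ne_zero _ ht)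
    have hkey : T + t ^ 2 • c 4 + t ^ 4 • c 6 + t ^ 6 • c 8
        = (2 * t ^ 2)⁻¹ • S t + (2 * t ^ 2)⁻¹ • S (-t)
          + (-((2 * t ^ 2)⁻¹ * 2)) • S 0 := by
      have hsm : (2 * t ^ 2 : ℂ) • (T + t ^ 2 • c 4 + t ^ 4 • c 6 + t ^ 6 • c 8)
          = S t + S (-t) - (2 : ℂ) • S 0 := by
        rw [heven t, h0]; abel
      have h2 := congrArg (fun x => (2 * t ^ 2 : ℂ)⁻¹ • x) hsm
      simp only [inv_smul_smul₀ h2t] at h2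
      rw [h2]
      simp only [smul_sub, smul_add, smul_smul]
      module
    refine ⟨![(2 * t ^ 2)⁻¹ • (a11 + t • a13 + t ^ 2 • a12),
              (2 * t ^ 2)⁻¹ • (a11 + (-t) • a13 + (-t) ^ 2 • a12),
              (-((2 * t ^ 2)⁻¹ * 2)) • (a11 + (0 : ℂ) • a13 + ((0 : ℂ)) ^ 2 • a12)],
            ![a21 + t ^ 2 • a22, a21 + (-t) ^ 2 • a22, a21 + ((0 : ℂ)) ^ 2 • a22],
            ![a31 + t • a32 + (t ^ 2 * lam) • a32,
              a31 + (-t) • a32 + ((-t) ^ 2 * lam) • a32,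
              a31 + (0 : ℂ) • a32 + (((0 : ℂ)) ^ 2 * lam) • a32],
            ![b₃ + t • b₂ + t ^ 2 • b₁, b₃ + (-t) • b₂ + (-t) ^ 2 • b₁,
              b₃ + (0 : ℂ) • b₂ + ((0 : ℂ)) ^ 2 • b₁], ?_⟩
    rw [hkey, hS t, hS (-t), hS 0]
    rw [Fin.sum_univ_three]
    simp only [Matrix.cons_val_zero, Matrix.cons_val_one, Matrix.head_cons,
      Matrix.cons_val_two, Matrix.tail_cons, smul_tmul']
  haveI : (nhdsWithin (0 : ℂ) {x | x ≠ 0}).NeBot := NormedField.nhdsNE_neBot 0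
  have htend : Filter.Tendsto (fun t : ℂ => T + t ^ 2 • c 4 + t ^ 4 • c 6 + t ^ 6 • c 8)
      (nhdsWithin (0 : ℂ) {x | x ≠ 0}) (nhds T) := by
    have hh := (hgcont.tendsto 0).mono_left
      (nhdsWithin_le_nhds (s := {x : ℂ | x ≠ 0}))
    simpa using hh
  exact mem_closure_of_tendsto htend
    (Filter.eventually_iff_exists_mem.2 ⟨{x | x ≠ 0}, self_mem_nhdsWithin,
      fun t ht => hmem t ht⟩)

end
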